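/- In the envy-cycles procedure, if the current partial allocation Y is EF1, agent i* is not envied by any agent, and item x (unallocated) is added to Y_{i*}, then the resulting allocation is still EF1. -/
import Mathlib


open Finset

/-- Envy-cycles step (EF1): if `Y` is EF1, agent `istar` is unenvied, and the
unallocated item `x` is added to `Y_istar`, then the result is still EF1. -/
theorem stmt_7 (n m : ℕ)
    (v : Fin n → Finset (Fin m) → ℝ)
    (hmono : ∀ i, ∀ S T : Finset (Fin m), S ⊆ T → v i S ≤ v i T)
    (Y : Fin n → Finset (Fin m))
    (hdisj : ∀ i j, i ≠ j → Disjoint (Y i) (Y j))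
    (x : Fin m) (hx : ∀ j, x ∉ Y j)
    (istar : Fin n)
    (hunenvied : ∀ j, v j (Y istar) ≤ v j (Y j))
    (hef1 : ∀ i j, (Y j).Nonempty → ∃ g ∈ Y j, v i (Y i) ≥ v i ((Y j).erase g)) :
    ∀ i j, (Function.update Y istar (insert x (Y istar)) j).Nonempty →
      ∃ g ∈ Function.update Y istar (insert x (Y istar)) j,
        v i (Function.update Y istar (insert x (Y istar)) i) ≥
          v i ((Function.update Y istar (insert x (Y istar)) j).erase g) := by
  intro i j hj
  have hvi : v i (Y i) ≤ v i (Function.update Y istar (insert x (Y istar)) i) := by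
    by_cases hi : i = istar
    · subst hi
      simp only [Function.update_self]
      exact hmono i _ _ (Finset.subset_insert _ _)
    · rw [Function.update_of_ne hi]
  by_cases hji : j = istar
  · subst hji
    refine ⟨x, ?_, ?_⟩
    · simp [Function.update_self]
    · rw [Function.update_self, Finset.erase_insert (hx _)]
      calc v i ((Y j)) ≤ v i (Y i) := by
            by_cases hi : i = j
            · subst hi; exact le_refl _
            · exact hunenvied i
        _ ≤ _ := hvi
  · rw [Function.update_of_ne hji] at hj ⊢
    obtain ⟨g, hg, hge⟩ := hef1 i j hj
    exact ⟨g, hg, le_trans hge hvi⟩
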